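/- For every integer d ≥ 2, the set S_d := {(a_0,a_1,a_2) ∈ (ℝ_{>0})³ : a_0 + a_1 x + a_2 y ≥ ((d+1)d·xy + (d+1)(x+y) + 1)^{1/(d+1)} for all x,y ≥ 0} is log-convex: if (a_0,a_1,a_2) and (b_0,b_1,b_2) lie in S_d, then (√(a_0b_0), √(a_1b_1), √(a_2b_2)) also lies in S_d. -/

import Mathlib

set_option maxHeartbeats 1000000


theorem stmt_10 (d : ℕ) (hd : 2 ≤ d)
    (a₀ a₁ a₂ b₀ b₁ b₂ : ℝ)
    (ha : 0 < a₀ ∧ 0 < a₁ ∧ 0 < a₂) (hb : 0 < b₀ ∧ 0 < b₁ ∧ 0 < b₂)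
    (hA : ∀ x y : ℝ, 0 ≤ x → 0 ≤ y →
      a₀ + a₁ * x + a₂ * y ≥
        (((d : ℝ) + 1) * (d : ℝ) * (x * y) + ((d : ℝ) + 1) * (x + y) + 1) ^
          ((1 : ℝ) / ((d : ℝ) + 1)))
    (hB : ∀ x y : ℝ, 0 ≤ x → 0 ≤ y →
      b₀ + b₁ * x + b₂ * y ≥
        (((d : ℝ) + 1) * (d : ℝ) * (x * y) + ((d : ℝ) + 1) * (x + y) + 1) ^
          ((1 : ℝ) / ((d : ℝ) + 1))) :
    ∀ x y : ℝ, 0 ≤ x → 0 ≤ y →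
      Real.sqrt (a₀ * b₀) + Real.sqrt (a₁ * b₁) * x + Real.sqrt (a₂ * b₂) * y ≥
        (((d : ℝ) + 1) * (d : ℝ) * (x * y) + ((d : ℝ) + 1) * (x + y) + 1) ^
          ((1 : ℝ) / ((d : ℝ) + 1)) := by
  obtain ⟨ha0, ha1, ha2⟩ := ha
  obtain ⟨hb0, hb1, hb2⟩ := hb
  intro x y hx hy
  set c : ℝ := ((d : ℝ) + 1) * (d : ℝ) with hc
  set e : ℝ := (d : ℝ) + 1 with he
  set p : ℝ := (1 : ℝ) / ((d : ℝ) + 1) with hp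
  have hd0 : (0 : ℝ) ≤ (d : ℝ) := Nat.cast_nonneg d
  have hcpos : 0 ≤ c := by positivity
  have hepos : 0 < e := by positivity
  have hppos : 0 < p := by positivity
  set s : ℝ := Real.sqrt (a₀ * b₁ / (a₁ * b₀)) with hs
  set t : ℝ := Real.sqrt (a₀ * b₂ / (a₂ * b₀)) with ht
  have hspos : 0 < s := Real.sqrt_pos.mpr (by positivity)
  have htpos : 0 < t := Real.sqrt_pos.mpr (by positivity)
  have hs2 : s ^ 2 = a₀ * b₁ / (a₁ * b₀) := Real.sq_sqrt (by positivity)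
  have ht2 : t ^ 2 = a₀ * b₂ / (a₂ * b₀) := Real.sq_sqrt (by positivity)
  set A : ℝ := a₀ + a₁ * (s * x) + a₂ * (t * y) with hAdef
  have hApos : 0 < A := by positivity
  set F₀ : ℝ := c * (x * y) + e * (x + y) + 1 with hF0
  set F₁ : ℝ := c * ((s * x) * (t * y)) + e * ((s * x) + (t * y)) + 1 with hF1
  set F₂ : ℝ := c * ((x / s) * (y / t)) + e * ((x / s) + (y / t)) + 1 with hF2
  have hF0pos : 0 < F₀ := by positivity
  have hF1pos : 0 < F₁ := by positivity
  have hF2pos : 0 < F₂ := by positivity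
  -- key polynomial inequality : F₀ ^ 2 ≤ F₁ * F₂
  have hkey : F₀ ^ 2 ≤ F₁ * F₂ := by
    rw [div_add_div _ _ (ne_of_gt hspos) (ne_of_gt htpos)] at hF2
    have hst : 0 < s * t := by positivity
    rw [hF0, hF1, hF2]
    rw [div_mul_div_comm]
    rw [← sub_nonneg]
    have expand : (c * (s * x * (t * y)) + e * (s * x + t * y) + 1) *
        (c * (x * y / (s * t)) + e * ((x * t + s * y) / (s * t)) + 1) -
        (c * (x * y) + e * (x + y) + 1) ^ 2 =
        (c * e * s * (x ^ 2 * y) * (t - 1) ^ 2 + c * e * t * (x * y ^ 2) * (s - 1) ^ 2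
          + c * (x * y) * (s * t - 1) ^ 2 + e ^ 2 * (x * y) * (s - t) ^ 2
          + e * t * x * (s - 1) ^ 2 + e * s * y * (t - 1) ^ 2) / (s * t) := by
      field_simp
      ring
    rw [expand]
    positivity
  -- bounds from hA, hB
  have h1 : F₁ ^ p ≤ A := hA (s * x) (t * y) (by positivity) (by positivity)
  have h2 : F₂ ^ p ≤ b₀ + b₁ * (x / s) + b₂ * (y / t) :=
    hB (x / s) (y / t) (by positivity) (by positivity)
  -- B expression equals (b₀/a₀) * A
  have hBeq : b₀ + b₁ * (x / s) + b₂ * (y / t) = (b₀ / a₀) * A := by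
    have hs2' : a₁ * b₀ * s ^ 2 = a₀ * b₁ := by rw [hs2]; field_simp
    have ht2' : a₂ * b₀ * t ^ 2 = a₀ * b₂ := by rw [ht2]; field_simp
    have hb1' : b₁ / s = (b₀ / a₀) * (a₁ * s) := by
      field_simp
      linear_combination -hs2'
    have hb2' : b₂ / t = (b₀ / a₀) * (a₂ * t) := by
      field_simp
      linear_combination -ht2'
    have e1 : b₁ * (x / s) = (b₁ / s) * x := by field_simp
    have e2 : b₂ * (y / t) = (b₂ / t) * y := by field_simp
    rw [hAdef, e1, e2, hb1', hb2']
    field_simp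
  -- LHS equals √(b₀/a₀) * A
  have hr : Real.sqrt (b₀ / a₀) > 0 := Real.sqrt_pos.mpr (by positivity)
  have hLHS : Real.sqrt (a₀ * b₀) + Real.sqrt (a₁ * b₁) * x + Real.sqrt (a₂ * b₂) * y =
      Real.sqrt (b₀ / a₀) * A := by
    have e0 : Real.sqrt (b₀ / a₀) * a₀ = Real.sqrt (a₀ * b₀) := by
      rw [← Real.sqrt_sq (le_of_lt ha0), ← Real.sqrt_mul (by positivity)]
      congr 1
      field_simp
      ring
      rw [Real.sq_sqrt (by positivity)]
    have e1 : Real.sqrt (b₀ / a₀) * (a₁ * s) = Real.sqrt (a₁ * b₁) := by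
      rw [hs, ← Real.sqrt_sq (le_of_lt ha1), ← Real.sqrt_mul (by positivity),
        ← Real.sqrt_mul (by positivity)]
      congr 1
      field_simp
      ring
      rw [Real.sq_sqrt (by positivity)]
    have e2 : Real.sqrt (b₀ / a₀) * (a₂ * t) = Real.sqrt (a₂ * b₂) := by
      rw [ht, ← Real.sqrt_sq (le_of_lt ha2), ← Real.sqrt_mul (by positivity),
        ← Real.sqrt_mul (by positivity)]
      congr 1
      field_simp
      ring
      rw [Real.sq_sqrt (by positivity)]
    rw [hAdef]
    rw [← e0, ← e1, ← e2]
    ring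
  rw [ge_iff_le, hLHS]
  -- chain: F₀^p ≤ (F₁ F₂)^(p/2) ≤ √(A · (b₀/a₀) A) = √(b₀/a₀) A
  have step1 : F₀ ^ p = (F₀ ^ 2) ^ (p / 2) := by
    rw [← Real.rpow_natCast F₀ 2, ← Real.rpow_mul (le_of_lt hF0pos)]
    congr 1
    push_cast
    ring
  have step2 : (F₀ ^ 2) ^ (p / 2) ≤ (F₁ * F₂) ^ (p / 2) :=
    Real.rpow_le_rpow (by positivity) hkey (by positivity)
  have step3 : (F₁ * F₂) ^ (p / 2) = Real.sqrt (F₁ ^ p * F₂ ^ p) := by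
    rw [Real.sqrt_eq_rpow, ← Real.mul_rpow hF1pos.le hF2pos.le,
      ← Real.rpow_mul (by positivity : (0:ℝ) ≤ F₁ * F₂)]
    congr 1
    ring
  have step4 : Real.sqrt (F₁ ^ p * F₂ ^ p) ≤ Real.sqrt (A * ((b₀ / a₀) * A)) := by
    apply Real.sqrt_le_sqrt
    have := hBeq ▸ h2
    exact mul_le_mul h1 this (by positivity) (le_of_lt hApos)
  have step5 : Real.sqrt (A * ((b₀ / a₀) * A)) = Real.sqrt (b₀ / a₀) * A := by
    rw [show A * ((b₀ / a₀) * A) = (b₀ / a₀) * A ^ 2 by ring,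
      Real.sqrt_mul (by positivity), Real.sqrt_sq (le_of_lt hApos)]
  calc F₀ ^ p = (F₀ ^ 2) ^ (p / 2) := step1
    _ ≤ (F₁ * F₂) ^ (p / 2) := step2
    _ = Real.sqrt (F₁ ^ p * F₂ ^ p) := step3
    _ ≤ Real.sqrt (A * ((b₀ / a₀) * A)) := step4
    _ = Real.sqrt (b₀ / a₀) * A := step5
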